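/- Sylvester's determinantal identity: det(M) · (a_{t,t}^{(t-1)})^{n-t-1} equals the determinant of the (n-t)×(n-t) matrix whose (i,j) entry is a_{t+i,t+j}^{(t)}, where a_{i,j}^{(t)} denotes the determinant of the (t+1)×(t+1) matrix formed by the leading principal t×t submatrix of M bordered by row i and column j. -/

import Mathlib

open Matrix

noncomputable section SylAux

private lemma det_map' {R S : Type*} [CommRing R] [CommRing S] {m : Type*} [Fintype m]
    [DecidableEq m] (f : R →+* S) (M : Matrix m m R) : (M.map f).det = f M.det := by
  rw [RingHom.map_det, RingHom.mapMatrix_apply]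

def sylMat {R : Type*} [CommRing R] {n t : ℕ} (ht : t < n)
    (M : Matrix (Fin n) (Fin n) R) : Matrix (Fin (n - t)) (Fin (n - t)) R :=
  Matrix.of (fun i j : Fin (n - t) =>
    (M.submatrix
      (Fin.snoc (Fin.castLE ht.le) (⟨t + i, by have := i.isLt; exact Nat.lt_sub_iff_add_lt'.mp this⟩ : Fin n))
      (Fin.snoc (Fin.castLE ht.le) (⟨t + j, by have := j.isLt; exact Nat.lt_sub_iff_add_lt'.mp this⟩ : Fin n))).det)

lemma sylMat_map {R S : Type*} [CommRing R] [CommRing S] (f : R →+* S) {n t : ℕ} (ht : t < n)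
    (M : Matrix (Fin n) (Fin n) R) :
    sylMat ht (M.map f) = (sylMat ht M).map f := by
  ext i j
  simp only [sylMat, Matrix.of_apply, Matrix.map_apply, Matrix.submatrix_map]
  rw [_root_.det_map']

lemma syl_unit {R : Type*} [CommRing R] {n t : ℕ} (ht : t < n)
    (M : Matrix (Fin n) (Fin n) R)
    (hA : IsUnit (M.submatrix (Fin.castLE ht.le) (Fin.castLE ht.le)).det) :
    M.det * ((M.submatrix (Fin.castLE ht.le) (Fin.castLE ht.le)).det) ^ (n - t - 1) =
      (sylMat ht M).det := by
  classical
  set rr : Fin t ⊕ Fin (n - t) → Fin n :=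
    Sum.elim (Fin.castLE ht.le) (fun j => ⟨t + j, by have := j.isLt; omega⟩) with hrr
  set A : Matrix (Fin t) (Fin t) R := M.submatrix (rr ∘ Sum.inl) (rr ∘ Sum.inl) with hAdef
  set B : Matrix (Fin t) (Fin (n - t)) R := M.submatrix (rr ∘ Sum.inl) (rr ∘ Sum.inr) with hBdef
  set C : Matrix (Fin (n - t)) (Fin t) R := M.submatrix (rr ∘ Sum.inr) (rr ∘ Sum.inl) with hCdef
  set D : Matrix (Fin (n - t)) (Fin (n - t)) R := M.submatrix (rr ∘ Sum.inr) (rr ∘ Sum.inr) with hDdef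
  have hAeq : A = M.submatrix (Fin.castLE ht.le) (Fin.castLE ht.le) := rfl
  haveI : Invertible A := A.invertibleOfIsUnitDet (hAeq ▸ hA)
  have hrre : rr = ⇑(finSumFinEquiv.trans (finCongr (by omega : t + (n - t) = n))) := by
    funext p
    cases p with
    | inl i => apply Fin.ext; simp [hrr]
    | inr j => apply Fin.ext; simp [hrr]
  have hblock : M.submatrix rr rr = fromBlocks A B C D := by
    ext (i | i) (j | j) <;> rfl
  have hMdet : M.det = A.det * (D - C * ⅟A * B).det := by
    rw [← Matrix.det_submatrix_equiv_self (finSumFinEquiv.trans (finCongr (by omega : t + (n - t) = n))) M,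
      ← hrre, hblock, Matrix.det_fromBlocks₁₁]
  have hrow : ∀ i : Fin (n - t),
      (Fin.snoc (Fin.castLE ht.le) (⟨t + i, by have := i.isLt; omega⟩ : Fin n)) ∘ ⇑finSumFinEquiv
        = Sum.elim (rr ∘ Sum.inl) (fun _ : Fin 1 => rr (Sum.inr i)) := by
    intro i
    funext p
    cases p with
    | inl k =>
      simp only [Function.comp_apply, finSumFinEquiv_apply_left, Sum.elim_inl]
      exact Fin.snoc_castSucc _ _ k
    | inr k =>
      have hk : (Fin.natAdd t k : Fin (t + 1)) = Fin.last t := by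
        apply Fin.ext
        simp [Fin.val_eq_zero]
      simp only [Function.comp_apply, finSumFinEquiv_apply_right, Sum.elim_inr]
      rw [hk, Fin.snoc_last]
      rfl
  have hsyl : sylMat ht M = A.det • (D - C * ⅟A * B) := by
    ext i j
    have h1 : (M.submatrix
          (Fin.snoc (Fin.castLE ht.le) (⟨t + i, by have := i.isLt; omega⟩ : Fin n))
          (Fin.snoc (Fin.castLE ht.le) (⟨t + j, by have := j.isLt; omega⟩ : Fin n))).det
        = (fromBlocks A (B.submatrix id (fun _ : Fin 1 => j))
            (C.submatrix (fun _ : Fin 1 => i) id)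
            (D.submatrix (fun _ : Fin 1 => i) (fun _ : Fin 1 => j))).det := by
      rw [← Matrix.det_submatrix_equiv_self finSumFinEquiv, Matrix.submatrix_submatrix,
        hrow i, hrow j]
      congr 1
      ext (a | a) (b | b) <;> rfl
    simp only [sylMat, Matrix.of_apply, h1, Matrix.det_fromBlocks₁₁, Matrix.smul_apply,
      smul_eq_mul]
    congr 1
    rw [Matrix.det_fin_one]
    simp [Matrix.sub_apply, Matrix.mul_apply]
  rw [hsyl, Matrix.det_smul, Fintype.card_fin, hMdet, ← hAeq]
  have hnt : A.det ^ (n - t) = A.det ^ (n - t - 1) * A.det := by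
    rw [← pow_succ]
    congr 1
    omega
  rw [hnt]
  ring

end SylAux

/-- Sylvester's determinantal identity. -/
theorem sylvester_identity {K : Type*} [Field K] {n t : ℕ} (ht : t < n)
    (M : Matrix (Fin n) (Fin n) K) :
    M.det * ((M.submatrix (Fin.castLE ht.le) (Fin.castLE ht.le)).det) ^ (n - t - 1) =
      (Matrix.of (fun i j : Fin (n - t) =>
        (M.submatrix
          (Fin.snoc (Fin.castLE ht.le) (⟨t + i, by have := i.isLt; omega⟩ : Fin n))
          (Fin.snoc (Fin.castLE ht.le) (⟨t + j, by have := j.isLt; omega⟩ : Fin n))).det)).det := by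
  classical
  set N : Matrix (Fin n) (Fin n) (Polynomial K) := Matrix.of (fun i j =>
    Polynomial.C (M i j) + if i = j ∧ (i : ℕ) < t then Polynomial.X else 0) with hN
  have hAN : N.submatrix (Fin.castLE ht.le) (Fin.castLE ht.le)
      = charmatrix (-(M.submatrix (Fin.castLE ht.le) (Fin.castLE ht.le))) := by
    refine Matrix.ext fun i j => ?_
    have hc : (Fin.castLE ht.le i = Fin.castLE ht.le j) ↔ i = j := by
      simp [Fin.ext_iff]
    by_cases h : i = j
    · subst h
      simp only [Matrix.submatrix_apply, hN, Matrix.of_apply, charmatrix_apply_eq,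
        Matrix.neg_apply, map_neg, sub_neg_eq_add]
      have : (↑(Fin.castLE ht.le i) : ℕ) < t := by simpa using i.isLt
      simp [this, add_comm]
    · rw [Matrix.submatrix_apply, charmatrix_apply_ne _ _ _ h]
      simp [hN, hc, h]
  have hdetne : (N.submatrix (Fin.castLE ht.le) (Fin.castLE ht.le)).det ≠ 0 := by
    rw [hAN]
    exact (Matrix.charpoly_monic _).ne_zero
  have hinj : Function.Injective (algebraMap (Polynomial K) (RatFunc K)) :=
    IsFractionRing.injective (Polynomial K) (RatFunc K)
  have hunit : IsUnit ((N.map (algebraMap (Polynomial K) (RatFunc K))).submatrix (Fin.castLE ht.le)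
      (Fin.castLE ht.le)).det := by
    rw [Matrix.submatrix_map, _root_.det_map']
    exact IsUnit.mk0 _ ((map_ne_zero_iff _ hinj).mpr hdetne)
  have hF := syl_unit ht (N.map (algebraMap (Polynomial K) (RatFunc K))) hunit
  rw [Matrix.submatrix_map, sylMat_map, _root_.det_map', _root_.det_map', _root_.det_map',
    ← map_pow, ← _root_.map_mul] at hF
  have hR : N.det * ((N.submatrix (Fin.castLE ht.le) (Fin.castLE ht.le)).det) ^ (n - t - 1)
      = (sylMat ht N).det := hinj hF
  have hev : N.map (Polynomial.evalRingHom (0 : K)) = M := by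
    refine Matrix.ext fun i j => ?_
    by_cases h : i = j ∧ (i : ℕ) < t
    · obtain ⟨rfl, h2⟩ := h
      simp only [hN, Matrix.map_apply, Matrix.of_apply, h2, and_true, if_pos rfl]
      simp
    · simp [hN, h]
  have hE := congrArg (Polynomial.evalRingHom (0 : K)) hR
  rw [_root_.map_mul, map_pow] at hE
  simp only [← _root_.det_map' (Polynomial.evalRingHom (0 : K))] at hE
  rw [← sylMat_map, ← Matrix.submatrix_map, hev] at hE
  exact hE
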